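/- For every f ∈ H₀^{2,2}((0,∞)) = {f ∈ L²([0,∞); dx) : f, f' ∈ AC([0,R]) for all R > 0; f(0₊) = 0; f'' ∈ L²([0,∞); dx)}, one has |f'(0₊)| ≤ 2^{-1/4} (∫₀^∞ (|f(x)|² + |f''(x)|²) dx)^{1/2}, and the constant 2^{-1/4} is best possible; equivalently, sup over 0 ≠ f ∈ H₀^{2,2}((0,∞)) of |f'(0₊)|² / (∫₀^∞ (|f|² + |f''|²) dx) = 2^{-1/2}. -/

import Mathlib

open MeasureTheory Set

/-- `f ∈ H₀^{2,2}((0,∞))`: `f ∈ L²([0,∞))`, `f, f'` absolutely continuous on every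
`[0,R]` (encoded through the integral representations with data `f', f''`),
`f(0₊) = 0`, and `f'' ∈ L²([0,∞))`. -/
def MemH022 (f f' f'' : ℝ → ℂ) : Prop :=
  f 0 = 0 ∧
  (∀ x : ℝ, 0 ≤ x → f x = ∫ t in (0 : ℝ)..x, f' t) ∧
  (∀ x : ℝ, 0 ≤ x → f' x = f' 0 + ∫ t in (0 : ℝ)..x, f'' t) ∧
  (∀ R : ℝ, 0 < R → IntegrableOn f' (Icc 0 R) volume) ∧
  (∀ R : ℝ, 0 < R → IntegrableOn f'' (Icc 0 R) volume) ∧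
  MemLp f 2 (volume.restrict (Ici (0 : ℝ))) ∧
  MemLp f'' 2 (volume.restrict (Ici (0 : ℝ)))

noncomputable section
namespace St17
open Filter Real

def a : ℝ := (Real.sqrt 2)⁻¹

lemma s2 : Real.sqrt 2 * Real.sqrt 2 = 2 := Real.mul_self_sqrt (by norm_num)
lemma s2pos : 0 < Real.sqrt 2 := Real.sqrt_pos.2 (by norm_num)
lemma ha : 0 < a := inv_pos.2 s2pos
lemma haa : a * a = 2⁻¹ := by
  rw [a, ← mul_inv]; rw [s2]
lemma ha1 : a ≤ 1 := by
  rw [a]; rw [inv_le_one_iff₀]; right; nlinarith [s2, s2pos]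

def p0 (x : ℝ) : ℝ := Real.exp (-(a*x)) * Real.sin (a*x)
def p1 (x : ℝ) : ℝ := a * (Real.exp (-(a*x)) * (Real.cos (a*x) - Real.sin (a*x)))
def p2 (x : ℝ) : ℝ := -(Real.exp (-(a*x)) * Real.cos (a*x))
def p3 (x : ℝ) : ℝ := a * (Real.exp (-(a*x)) * (Real.cos (a*x) + Real.sin (a*x)))

lemma hE (x : ℝ) : HasDerivAt (fun y : ℝ => Real.exp (-(a*y))) (-a * Real.exp (-(a*x))) x := by
  have h1 : HasDerivAt (fun y : ℝ => -(a*y)) (-a) x := by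
    simpa using ((hasDerivAt_id x).const_mul (-a))
  simpa [mul_comm] using h1.exp
lemma hS (x : ℝ) : HasDerivAt (fun y : ℝ => Real.sin (a*y)) (a * Real.cos (a*x)) x := by
  have h1 : HasDerivAt (fun y : ℝ => a*y) a x := by simpa using (hasDerivAt_id x).const_mul a
  simpa [mul_comm] using h1.sin
lemma hC (x : ℝ) : HasDerivAt (fun y : ℝ => Real.cos (a*x)) 0 x := hasDerivAt_const _ _
lemma hC' (x : ℝ) : HasDerivAt (fun y : ℝ => Real.cos (a*y)) (-(a * Real.sin (a*x))) x := by
  have h1 : HasDerivAt (fun y : ℝ => a*y) a x := by simpa using (hasDerivAt_id x).const_mul a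
  simpa [mul_comm] using h1.cos

lemma hd0 (x : ℝ) : HasDerivAt p0 (p1 x) x := by
  have := (hE x).mul (hS x)
  refine this.congr_deriv ?_
  simp only [p1]; ring
lemma hd1 (x : ℝ) : HasDerivAt p1 (p2 x) x := by
  have := (((hE x).mul ((hC' x).sub (hS x))).const_mul a)
  refine this.congr_deriv ?_
  simp only [p2, Pi.sub_apply]
  linear_combination (-2 * Real.exp (-(a*x)) * Real.cos (a*x)) * haa
lemma hd2 (x : ℝ) : HasDerivAt p2 (p3 x) x := by
  have := ((hE x).mul (hC' x)).neg
  refine this.congr_deriv ?_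
  simp only [p3]; ring
lemma hd3 (x : ℝ) : HasDerivAt p3 (-p0 x) x := by
  have := (((hE x).mul ((hC' x).add (hS x))).const_mul a)
  refine this.congr_deriv ?_
  simp only [p0, Pi.add_apply]
  linear_combination (-2 * Real.exp (-(a*x)) * Real.sin (a*x)) * haa

lemma p00 : p0 0 = 0 := by simp [p0]
lemma p10 : p1 0 = a := by simp [p1]
lemma p20 : p2 0 = -1 := by simp [p2]
lemma p30 : p3 0 = a := by simp [p3]

lemma hb0 (x : ℝ) : |p0 x| ≤ Real.exp (-(a*x)) := by
  rw [p0, abs_mul, abs_of_pos (Real.exp_pos _)]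
  nlinarith [abs_sin_le_one (a*x), Real.exp_pos (-(a*x)), abs_nonneg (Real.sin (a*x))]
lemma hb2 (x : ℝ) : |p2 x| ≤ Real.exp (-(a*x)) := by
  rw [p2, abs_neg, abs_mul, abs_of_pos (Real.exp_pos _)]
  nlinarith [abs_cos_le_one (a*x), Real.exp_pos (-(a*x)), abs_nonneg (Real.cos (a*x))]
lemma hb3 (x : ℝ) : |p3 x| ≤ 2 * Real.exp (-(a*x)) := by
  rw [p3, abs_mul, abs_mul, abs_of_pos (Real.exp_pos _), abs_of_pos ha]
  have h1 : |Real.cos (a*x) + Real.sin (a*x)| ≤ 2 := by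
    calc |Real.cos (a*x) + Real.sin (a*x)| ≤ |Real.cos (a*x)| + |Real.sin (a*x)| := abs_add_le _ _
    _ ≤ 2 := by linarith [abs_sin_le_one (a*x), abs_cos_le_one (a*x)]
  have h2 : Real.exp (-(a*x)) * |Real.cos (a*x) + Real.sin (a*x)| ≤ Real.exp (-(a*x)) * 2 :=
    mul_le_mul_of_nonneg_left h1 (Real.exp_pos _).le
  calc a * (Real.exp (-(a*x)) * |Real.cos (a*x) + Real.sin (a*x)|)
      ≤ 1 * (Real.exp (-(a*x)) * 2) := mul_le_mul ha1 h2 (by positivity) one_pos.le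
    _ = 2 * Real.exp (-(a*x)) := by ring

lemma exp_le_one {x : ℝ} (hx : 0 ≤ x) : Real.exp (-(a*x)) ≤ 1 := by
  rw [Real.exp_le_one_iff]; nlinarith [ha]

lemma sq_sum (x : ℝ) : p0 x ^ 2 + p2 x ^ 2 = Real.exp (-(2*a*x)) := by
  have h := Real.sin_sq_add_cos_sq (a*x)
  have : Real.exp (-(2*a*x)) = Real.exp (-(a*x)) ^2 := by
    rw [← Real.exp_nat_mul]; ring_nf
  rw [this, p0, p2]; nlinarith [h]


def q0 : ℝ → ℂ := fun x => (p0 x : ℂ)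
def q1 : ℝ → ℂ := fun x => (p1 x : ℂ)
def q2 : ℝ → ℂ := fun x => (p2 x : ℂ)
def q3 : ℝ → ℂ := fun x => (p3 x : ℂ)

lemma cont_p0 : Continuous p0 := continuous_iff_continuousAt.2 fun x => (hd0 x).continuousAt
lemma cont_p1 : Continuous p1 := continuous_iff_continuousAt.2 fun x => (hd1 x).continuousAt
lemma cont_p2 : Continuous p2 := continuous_iff_continuousAt.2 fun x => (hd2 x).continuousAt
lemma cont_p3 : Continuous p3 := continuous_iff_continuousAt.2 fun x => (hd3 x).continuousAt
lemma cont_q0 : Continuous q0 := Complex.continuous_ofReal.comp cont_p0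
lemma cont_q1 : Continuous q1 := Complex.continuous_ofReal.comp cont_p1
lemma cont_q2 : Continuous q2 := Complex.continuous_ofReal.comp cont_p2
lemma cont_q3 : Continuous q3 := Complex.continuous_ofReal.comp cont_p3

lemma hq0 (x : ℝ) : HasDerivAt q0 (q1 x) x := (hd0 x).ofReal_comp
lemma hq1 (x : ℝ) : HasDerivAt q1 (q2 x) x := (hd1 x).ofReal_comp
lemma hq2 (x : ℝ) : HasDerivAt q2 (q3 x) x := (hd2 x).ofReal_comp
lemma hq3 (x : ℝ) : HasDerivAt q3 (-q0 x) x := by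
  have := (hd3 x).ofReal_comp
  exact this.congr_deriv (by simp [q0])

lemma nq0 (x : ℝ) : ‖q0 x‖ = |p0 x| := Complex.norm_real _
lemma nq2 (x : ℝ) : ‖q2 x‖ = |p2 x| := Complex.norm_real _
lemma nq3 (x : ℝ) : ‖q3 x‖ = |p3 x| := Complex.norm_real _

lemma ftc1 (x y : ℝ) : ∫ t in x..y, q1 t = q0 y - q0 x :=
  intervalIntegral.integral_eq_sub_of_hasDerivAt (fun t _ => hq0 t) (cont_q1.intervalIntegrable _ _)
lemma ftc2 (x y : ℝ) : ∫ t in x..y, q2 t = q1 y - q1 x :=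
  intervalIntegral.integral_eq_sub_of_hasDerivAt (fun t _ => hq1 t) (cont_q2.intervalIntegrable _ _)
lemma ftc3 (x y : ℝ) : ∫ t in x..y, q3 t = q2 y - q2 x :=
  intervalIntegral.integral_eq_sub_of_hasDerivAt (fun t _ => hq2 t) (cont_q3.intervalIntegrable _ _)
lemma ftc4 (x y : ℝ) : ∫ t in x..y, -q0 t = q3 y - q3 x :=
  intervalIntegral.integral_eq_sub_of_hasDerivAt (fun t _ => hq3 t) ((cont_q0.neg).intervalIntegrable _ _)

lemma int_exp2 : IntegrableOn (fun x => Real.exp (-(2*a*x))) (Ici 0) volume := by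
  rw [integrableOn_Ici_iff_integrableOn_Ioi]
  have := exp_neg_integrableOn_Ioi (0:ℝ) (b := 2*a) (by nlinarith [ha])
  simpa [neg_mul, mul_assoc] using this

lemma twoainv : (2*a)⁻¹ = a := by
  refine inv_eq_of_mul_eq_one_right ?_
  nlinarith [haa]

lemma val_exp2 : ∫ x in Ici (0:ℝ), Real.exp (-(2*a*x)) = a := by
  rw [integral_Ici_eq_integral_Ioi]
  have hF : ∀ x ∈ Ioi (0:ℝ), HasDerivAt (fun y => -(2*a)⁻¹ * Real.exp (-(2*a*y)))
      (Real.exp (-(2*a*x))) x := by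
    intro x _
    have h1 : HasDerivAt (fun y : ℝ => -(2*a*y)) (-(2*a)) x := by
      simpa using ((hasDerivAt_id x).const_mul (-(2*a)))
    have := (h1.exp).const_mul (-(2*a)⁻¹)
    refine this.congr_deriv ?_
    have h2a : (2*a) ≠ 0 := ne_of_gt (by nlinarith [ha])
    field_simp [ha.ne']
  have hten : Tendsto (fun y => -(2*a)⁻¹ * Real.exp (-(2*a*y))) atTop (nhds 0) := by
    have h2 : Tendsto (fun y : ℝ => -(2*a*y)) atTop atBot := by
      apply tendsto_neg_atBot_iff.mpr
      exact (tendsto_const_mul_atTop_of_pos (by nlinarith [ha])).2 tendsto_id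
    have := (Real.tendsto_exp_atBot.comp h2).const_mul (-(2*a)⁻¹)
    simpa using this
  have hcont : ContinuousWithinAt (fun y => -(2*a)⁻¹ * Real.exp (-(2*a*y))) (Ici 0) 0 :=
    (Continuous.continuousWithinAt (by continuity))
  have := integral_Ioi_of_hasDerivAt_of_tendsto hcont hF
    (int_exp2.mono_set Ioi_subset_Ici_self) hten
  rw [this]
  have h0 : Real.exp (-(2*a*0)) = 1 := by norm_num
  rw [h0]
  simp only [mul_one, zero_sub, neg_neg]
  exact twoainv

lemma sqnorm_sum (x : ℝ) : ‖q0 x‖^2 + ‖q2 x‖^2 = Real.exp (-(2*a*x)) := by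
  rw [nq0, nq2, sq_abs, sq_abs, sq_sum]

lemma val_q : ∫ x in Ici (0:ℝ), (‖q0 x‖^2 + ‖q2 x‖^2) = a := by
  rw [← val_exp2]
  exact setIntegral_congr_fun measurableSet_Ici (fun x _ => sqnorm_sum x)

lemma int_sqnorm_q : Integrable (fun x => ‖q0 x‖^2 + ‖q2 x‖^2) (volume.restrict (Ici 0)) := by
  have := int_exp2
  exact this.congr (Eventually.of_forall fun x => (sqnorm_sum x).symm)

lemma mq0 : MemLp q0 2 (volume.restrict (Ici (0:ℝ))) := by
  rw [memLp_two_iff_integrable_sq_norm (cont_q0.aestronglyMeasurable)]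
  refine int_exp2.mono' ?_ ?_
  · exact (cont_q0.norm.pow 2).aestronglyMeasurable
  · refine Eventually.of_forall fun x => ?_
    have h := hb0 x
    rw [Real.norm_eq_abs, abs_of_nonneg (by positivity)]
    calc ‖q0 x‖^2 = |p0 x|^2 := by rw [nq0]
    _ ≤ Real.exp (-(a*x))^2 := by nlinarith [abs_nonneg (p0 x)]
    _ = Real.exp (-(2*a*x)) := by rw [← Real.exp_nat_mul]; ring_nf

lemma mq2 : MemLp q2 2 (volume.restrict (Ici (0:ℝ))) := by
  rw [memLp_two_iff_integrable_sq_norm (cont_q2.aestronglyMeasurable)]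
  refine int_exp2.mono' ?_ ?_
  · exact (cont_q2.norm.pow 2).aestronglyMeasurable
  · refine Eventually.of_forall fun x => ?_
    have h := hb2 x
    rw [Real.norm_eq_abs, abs_of_nonneg (by positivity)]
    calc ‖q2 x‖^2 = |p2 x|^2 := by rw [nq2]
    _ ≤ Real.exp (-(a*x))^2 := by nlinarith [abs_nonneg (p2 x)]
    _ = Real.exp (-(2*a*x)) := by rw [← Real.exp_nat_mul]; ring_nf

lemma memq : MemH022 q0 q1 q2 := by
  refine ⟨by simp [q0, p00], fun x hx => ?_, fun x hx => ?_, fun R hR => ?_, fun R hR => ?_, mq0, mq2⟩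
  · rw [ftc1]; simp [q0, p00]
  · rw [ftc2]; ring
  · exact (cont_q1.integrableOn_Icc)
  · exact (cont_q2.integrableOn_Icc)


lemma integral_CS {α : Type*} [MeasurableSpace α] {μ : Measure α} (u v : α → ℝ)
    (hu2 : Integrable (fun x => u x^2) μ) (hv2 : Integrable (fun x => v x^2) μ)
    (huv : Integrable (fun x => u x * v x) μ)
    (hu0 : 0 ≤ᵐ[μ] u) (hv0 : 0 ≤ᵐ[μ] v) :
    ∫ x, u x * v x ∂μ ≤ Real.sqrt (∫ x, u x^2 ∂μ) * Real.sqrt (∫ x, v x^2 ∂μ) := by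
  set A := ∫ x, u x^2 ∂μ with hA
  set B := ∫ x, v x^2 ∂μ with hB
  set C := ∫ x, u x * v x ∂μ with hC
  have hA0 : 0 ≤ A := integral_nonneg fun x => sq_nonneg _
  have hB0 : 0 ≤ B := integral_nonneg fun x => sq_nonneg _
  have hC0 : 0 ≤ C := by
    refine integral_nonneg_of_ae ?_
    filter_upwards [hu0, hv0] with x h1 h2
    exact mul_nonneg h1 h2
  have quad : ∀ t : ℝ, 0 ≤ A * (t * t) + (-2*C) * t + B := by
    intro t
    have h1 : 0 ≤ ∫ x, (t * u x - v x)^2 ∂μ := integral_nonneg fun x => sq_nonneg _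
    have i1 : Integrable (fun x => (t^2) * (u x^2) - (2*t) * (u x * v x)) μ :=
      (hu2.const_mul _).sub (huv.const_mul _)
    have h2 : ∫ x, (t * u x - v x)^2 ∂μ = A * (t * t) + (-2*C) * t + B := by
      have e : (fun x => (t * u x - v x)^2)
          = fun x => ((t^2) * (u x^2) - (2*t) * (u x * v x)) + v x^2 := funext fun x => by ring
      rw [e, integral_add i1 hv2, integral_sub (hu2.const_mul _) (huv.const_mul _),
        integral_const_mul, integral_const_mul]
      ring
    linarith [h2 ▸ h1]
  have hd := discrim_le_zero quad
  rw [discrim] at hd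
  have hCsq : C^2 ≤ A * B := by nlinarith [hd]
  calc C = Real.sqrt (C^2) := by rw [Real.sqrt_sq hC0]
  _ ≤ Real.sqrt (A*B) := Real.sqrt_le_sqrt hCsq
  _ = Real.sqrt A * Real.sqrt B := Real.sqrt_mul hA0 B

lemma swap_ibp (g h : ℝ → ℂ) {R : ℝ} (hg : IntegrableOn g (Ioc 0 R) volume)
    (hh : IntegrableOn h (Ioc 0 R) volume) :
    ∫ t in Ioc (0:ℝ) R, g t * (∫ s in Ioc t R, h s) =
      ∫ s in Ioc (0:ℝ) R, (∫ t in Ioc (0:ℝ) s, g t) * h s := by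
  set μ := volume.restrict (Ioc (0:ℝ) R) with hμ
  set F : ℝ × ℝ → ℂ := {p : ℝ × ℝ | p.1 < p.2}.indicator (fun p => g p.1 * h p.2) with hF
  have hmeas : MeasurableSet {p : ℝ × ℝ | p.1 < p.2} :=
    measurableSet_lt measurable_fst measurable_snd
  have hint : Integrable F (μ.prod μ) := (hg.mul_prod hh).indicator hmeas
  have hswap := integral_integral_swap (f := fun t s => F (t, s)) (by exact hint)
  have hL : ∫ t, (∫ s, F (t, s) ∂μ) ∂μ = ∫ t in Ioc (0:ℝ) R, g t * (∫ s in Ioc t R, h s) := by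
    refine integral_congr_ae ?_
    filter_upwards [ae_restrict_mem measurableSet_Ioc] with t ht
    have e1 : (fun s => F (t, s)) = (Ioi t).indicator (fun s => g t * h s) := by
      funext s
      simp only [hF, Set.indicator_apply, mem_setOf_eq, mem_Ioi]
    rw [e1, integral_indicator measurableSet_Ioi, hμ, Measure.restrict_restrict measurableSet_Ioi]
    have e2 : Ioi t ∩ Ioc 0 R = Ioc t R := by
      ext s
      simp only [mem_inter_iff, mem_Ioi, mem_Ioc]
      constructor
      · rintro ⟨h1, _, h3⟩; exact ⟨h1, h3⟩
      · rintro ⟨h1, h3⟩; exact ⟨h1, lt_trans ht.1 h1, h3⟩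
    rw [e2, integral_const_mul]
  have hR' : ∫ s, (∫ t, F (t, s) ∂μ) ∂μ = ∫ s in Ioc (0:ℝ) R, (∫ t in Ioc (0:ℝ) s, g t) * h s := by
    refine integral_congr_ae ?_
    filter_upwards [ae_restrict_mem measurableSet_Ioc] with s hs
    have e1 : (fun t => F (t, s)) = (Iio s).indicator (fun t => g t * h s) := by
      funext t
      simp only [hF, Set.indicator_apply, mem_setOf_eq, mem_Iio]
    rw [e1, integral_indicator measurableSet_Iio, hμ, Measure.restrict_restrict measurableSet_Iio]
    have e2 : Iio s ∩ Ioc 0 R = Ioo 0 s := by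
      ext t
      simp only [mem_inter_iff, mem_Iio, mem_Ioc, mem_Ioo]
      constructor
      · rintro ⟨h1, h2, _⟩; exact ⟨h2, h1⟩
      · rintro ⟨h2, h1⟩; exact ⟨h1, h2, le_trans (le_of_lt h1) hs.2⟩
    rw [e2, integral_mul_const, ← integral_Ioc_eq_integral_Ioo]
  rw [← hL, ← hR']
  exact hswap


lemma bdd_mul_int {g ψ : ℝ → ℂ} {s : Set ℝ} (hs : MeasurableSet s)
    (hg : IntegrableOn g s volume) (hψ : Continuous ψ) (c : ℝ)
    (hb : ∀ x ∈ s, ‖ψ x‖ ≤ c) : IntegrableOn (fun x => g x * ψ x) s volume := by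
  have h1 : Integrable (fun x => ψ x * g x) (volume.restrict s) := by
    refine hg.bdd_mul (c := c) hψ.aestronglyMeasurable ?_
    filter_upwards [ae_restrict_mem hs] with x hx
    exact hb x hx
  exact h1.congr (Eventually.of_forall fun x => mul_comm _ _)

lemma q0_bdd : ∀ x ∈ Ioc (0:ℝ) R, ‖q0 x‖ ≤ 1 := by
  intro x hx
  rw [nq0]
  exact le_trans (hb0 x) (exp_le_one hx.1.le)

section Identity

variable {f f' f'' : ℝ → ℂ}

lemma key_identity (hm : MemH022 f f' f'') {R : ℝ} (hR : 0 < R) :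
    ∫ x in Ioc (0:ℝ) R, (f x * q0 x + f'' x * q2 x)
      = f' 0 + f' R * q2 R - f R * q3 R := by
  obtain ⟨h0, hrep, hrep', hif', hif'', hL2f, hL2f''⟩ := hm
  have Hf' : IntegrableOn f' (Ioc 0 R) volume := (hif' R hR).mono_set Ioc_subset_Icc_self
  have Hf'' : IntegrableOn f'' (Ioc 0 R) volume := (hif'' R hR).mono_set Ioc_subset_Icc_self
  have rep1 : ∀ s : ℝ, 0 ≤ s → ∫ t in Ioc (0:ℝ) s, f' t = f s := by
    intro s hs
    rw [← intervalIntegral.integral_of_le hs, ← hrep s hs]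
  have rep2 : ∀ s : ℝ, 0 ≤ s → ∫ t in Ioc (0:ℝ) s, f'' t = f' s - f' 0 := by
    intro s hs
    rw [← intervalIntegral.integral_of_le hs]
    have := hrep' s hs
    rw [this]; ring
  have G3eq : ∀ t : ℝ, t ≤ R → (∫ s in Ioc t R, q3 s) = q2 R - q2 t := by
    intro t ht
    rw [← intervalIntegral.integral_of_le ht, ftc3]
  have G0eq : ∀ t : ℝ, t ≤ R → (∫ s in Ioc t R, q0 s) = q3 t - q3 R := by
    intro t ht
    have h4 := ftc4 t R
    rw [intervalIntegral.integral_neg] at h4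
    rw [← intervalIntegral.integral_of_le ht]
    linear_combination -h4
  -- measurability / integrability of f on Ioc 0 R
  have hsub : volume.restrict (Ioc (0:ℝ) R) ≤ volume.restrict (Ici (0:ℝ)) :=
    Measure.restrict_mono (fun x hx => hx.1.le) le_rfl
  have hfm : AEStronglyMeasurable f (volume.restrict (Ioc (0:ℝ) R)) := hL2f.1.mono_measure hsub
  have hf2 : Integrable (fun x => ‖f x‖^2) (volume.restrict (Ici (0:ℝ))) :=
    (memLp_two_iff_integrable_sq_norm hL2f.1).1 hL2f
  have hf2R : Integrable (fun x => ‖f x‖^2) (volume.restrict (Ioc (0:ℝ) R)) :=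
    hf2.mono_measure hsub
  have Hfq0 : IntegrableOn (fun x => f x * q0 x) (Ioc 0 R) volume := by
    refine Integrable.mono' ((hf2R.add (integrable_const 1)).const_mul (1/2))
      (hfm.mul cont_q0.aestronglyMeasurable) ?_
    filter_upwards [ae_restrict_mem measurableSet_Ioc] with x hx
    rw [norm_mul]
    have h1 : ‖q0 x‖ ≤ 1 := q0_bdd x hx
    have h2 : (0:ℝ) ≤ ‖f x‖ := norm_nonneg _
    calc ‖f x‖ * ‖q0 x‖ ≤ ‖f x‖ * 1 := mul_le_mul_of_nonneg_left h1 h2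
    _ ≤ 1/2 * (‖f x‖^2 + 1) := by nlinarith [sq_nonneg (‖f x‖ - 1)]
  have Hq3 : IntegrableOn q3 (Ioc 0 R) volume := cont_q3.integrableOn_Ioc
  have q2b : ∀ x ∈ Ioc (0:ℝ) R, ‖q2 x‖ ≤ 1 := by
    intro x hx; rw [nq2]; exact le_trans (hb2 x) (exp_le_one hx.1.le)
  have q3b : ∀ x ∈ Ioc (0:ℝ) R, ‖q3 x‖ ≤ 2 := by
    intro x hx; rw [nq3]
    refine le_trans (hb3 x) ?_
    nlinarith [exp_le_one hx.1.le, Real.exp_pos (-(a*x))]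
  have Hf''q2 : IntegrableOn (fun x => f'' x * q2 x) (Ioc 0 R) volume :=
    bdd_mul_int measurableSet_Ioc Hf'' cont_q2 1 q2b
  have Hf'q3 : IntegrableOn (fun x => f' x * q3 x) (Ioc 0 R) volume :=
    bdd_mul_int measurableSet_Ioc Hf' cont_q3 2 q3b
  -- Step B : ∫ f' q3
  have stepB : ∫ t in Ioc (0:ℝ) R, f' t * q3 t
      = f R * q3 R + ∫ s in Ioc (0:ℝ) R, f s * q0 s := by
    have e1 : ∫ t in Ioc (0:ℝ) R, f' t * q3 t
        = ∫ t in Ioc (0:ℝ) R, (f' t * q3 R + f' t * (∫ s in Ioc t R, q0 s)) := by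
      refine setIntegral_congr_fun measurableSet_Ioc (fun t ht => ?_)
      rw [G0eq t ht.2]; ring
    have i1 : IntegrableOn (fun t => f' t * q3 R) (Ioc 0 R) volume := Hf'.mul_const _
    have i2 : IntegrableOn (fun t => f' t * (∫ s in Ioc t R, q0 s)) (Ioc 0 R) volume := by
      have base : IntegrableOn (fun t => f' t * q3 t - f' t * q3 R) (Ioc 0 R) volume :=
        Hf'q3.sub (Hf'.mul_const _)
      refine base.congr ?_
      filter_upwards [ae_restrict_mem measurableSet_Ioc] with t ht
      rw [G0eq t ht.2]; ring
    rw [e1, integral_add i1 i2, integral_mul_const, rep1 R hR.le,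
      swap_ibp f' q0 Hf' cont_q0.integrableOn_Ioc]
    congr 1
    refine setIntegral_congr_fun measurableSet_Ioc (fun s hs => ?_)
    rw [rep1 s hs.1.le]
  -- Step A : ∫ f'' q2
  have stepA : ∫ t in Ioc (0:ℝ) R, f'' t * q2 t
      = (f' R - f' 0) * q2 R - ((∫ s in Ioc (0:ℝ) R, f' s * q3 s)
          - f' 0 * (q2 R - q2 0)) := by
    have e1 : ∫ t in Ioc (0:ℝ) R, f'' t * q2 t
        = ∫ t in Ioc (0:ℝ) R, (f'' t * q2 R - f'' t * (∫ s in Ioc t R, q3 s)) := by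
      refine setIntegral_congr_fun measurableSet_Ioc (fun t ht => ?_)
      rw [G3eq t ht.2]; ring
    have i1 : IntegrableOn (fun t => f'' t * q2 R) (Ioc 0 R) volume := Hf''.mul_const _
    have i2 : IntegrableOn (fun t => f'' t * (∫ s in Ioc t R, q3 s)) (Ioc 0 R) volume := by
      have base : IntegrableOn (fun t => f'' t * q2 R - f'' t * q2 t) (Ioc 0 R) volume :=
        i1.sub Hf''q2
      refine base.congr ?_
      filter_upwards [ae_restrict_mem measurableSet_Ioc] with t ht
      rw [G3eq t ht.2]; ring
    rw [e1, integral_sub i1 i2, integral_mul_const, rep2 R hR.le,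
      swap_ibp f'' q3 Hf'' Hq3]
    congr 1
    have e2 : ∫ s in Ioc (0:ℝ) R, (∫ t in Ioc (0:ℝ) s, f'' t) * q3 s
        = ∫ s in Ioc (0:ℝ) R, (f' s * q3 s - f' 0 * q3 s) := by
      refine setIntegral_congr_fun measurableSet_Ioc (fun s hs => ?_)
      rw [rep2 s hs.1.le]; ring
    rw [e2, integral_sub Hf'q3 (Hq3.const_mul _), integral_const_mul, G3eq 0 hR.le]
  -- combine
  rw [integral_add Hfq0 Hf''q2, stepA, stepB]
  have hq20 : q2 0 = -1 := by
    simp [q2, p20]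
  rw [hq20]
  ring

end Identity


lemma exp_tendsto0 : Tendsto (fun x : ℝ => Real.exp (-(a*x))) atTop (nhds 0) := by
  have h2 : Tendsto (fun y : ℝ => -(a*y)) atTop atBot := by
    apply tendsto_neg_atBot_iff.mpr
    exact (tendsto_const_mul_atTop_of_pos ha).2 tendsto_id
  exact Real.tendsto_exp_atBot.comp h2

lemma x_exp_tendsto0 : Tendsto (fun x : ℝ => x * Real.exp (-(a*x))) atTop (nhds 0) := by
  have h0 := tendsto_pow_mul_exp_neg_atTop_nhds_zero 1
  have hax : Tendsto (fun x : ℝ => a * x) atTop atTop :=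
    (tendsto_const_mul_atTop_of_pos ha).2 tendsto_id
  have h1 : Tendsto (fun x : ℝ => (a*x)^1 * Real.exp (-(a*x))) atTop (nhds 0) := h0.comp hax
  have h2 := h1.const_mul a⁻¹
  rw [mul_zero] at h2
  refine h2.congr fun x => ?_
  have : a ≠ 0 := ne_of_gt ha
  field_simp

lemma sqrt_exp_tendsto0 :
    Tendsto (fun x : ℝ => Real.sqrt x * Real.exp (-(a*x))) atTop (nhds 0) := by
  have hup : Tendsto (fun x : ℝ => Real.exp (-(a*x)) + x * Real.exp (-(a*x))) atTop (nhds 0) := by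
    have := exp_tendsto0.add x_exp_tendsto0
    simpa using this
  refine tendsto_of_tendsto_of_tendsto_of_le_of_le' tendsto_const_nhds hup ?_ ?_
  · filter_upwards [eventually_ge_atTop (0:ℝ)] with x hx
    positivity
  · filter_upwards [eventually_ge_atTop (0:ℝ)] with x hx
    have h1 : Real.sqrt x ≤ 1 + x := by
      rcases le_total x 1 with h | h
      · have := Real.sqrt_le_sqrt h
        simp only [Real.sqrt_one] at this
        linarith
      · have hs : Real.sqrt x * Real.sqrt x = x := Real.mul_self_sqrt hx
        have h1x : (1:ℝ) ≤ Real.sqrt x := by nlinarith [Real.sqrt_nonneg x]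
        nlinarith [Real.sqrt_nonneg x]
    calc Real.sqrt x * Real.exp (-(a*x)) ≤ (1+x) * Real.exp (-(a*x)) :=
      mul_le_mul_of_nonneg_right h1 (Real.exp_pos _).le
    _ = Real.exp (-(a*x)) + x * Real.exp (-(a*x)) := by ring

lemma decay (c1 c2 : ℝ) :
    Tendsto (fun x : ℝ => (c1 + c2 * Real.sqrt x) * Real.exp (-(a*x))) atTop (nhds 0) := by
  have := (exp_tendsto0.const_mul c1).add (sqrt_exp_tendsto0.const_mul c2)
  simp only [mul_zero, add_zero] at this
  refine this.congr fun x => ?_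
  ring

section Main

variable {f f' f'' : ℝ → ℂ}

lemma int_prod_half (hm : MemH022 f f' f'') :
    IntegrableOn (fun x => f x * q0 x + f'' x * q2 x) (Ici 0) volume := by
  obtain ⟨h0, hrep, hrep', hif', hif'', hL2f, hL2f''⟩ := hm
  have hf2 : Integrable (fun x => ‖f x‖^2) (volume.restrict (Ici (0:ℝ))) :=
    (memLp_two_iff_integrable_sq_norm hL2f.1).1 hL2f
  have hf''2 : Integrable (fun x => ‖f'' x‖^2) (volume.restrict (Ici (0:ℝ))) :=
    (memLp_two_iff_integrable_sq_norm hL2f''.1).1 hL2f''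
  have key : ∀ (g : ℝ → ℂ) (ψ : ℝ → ℂ), AEStronglyMeasurable g (volume.restrict (Ici (0:ℝ))) →
      Integrable (fun x => ‖g x‖^2) (volume.restrict (Ici (0:ℝ))) → Continuous ψ →
      (∀ x, ‖ψ x‖ ≤ Real.exp (-(a*x))) →
      IntegrableOn (fun x => g x * ψ x) (Ici 0) volume := by
    intro g ψ hgm hg2 hψ hψb
    refine Integrable.mono' ((hg2.add int_exp2).const_mul (1/2))
      (hgm.mul hψ.aestronglyMeasurable) ?_
    refine Eventually.of_forall fun x => ?_
    rw [norm_mul]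
    have h1 : ‖ψ x‖ ≤ Real.exp (-(a*x)) := hψb x
    have e2 : Real.exp (-(a*x))^2 = Real.exp (-(2*a*x)) := by
      rw [← Real.exp_nat_mul]; ring_nf
    have h2 : (0:ℝ) ≤ ‖g x‖ := norm_nonneg _
    calc ‖g x‖ * ‖ψ x‖ ≤ ‖g x‖ * Real.exp (-(a*x)) := mul_le_mul_of_nonneg_left h1 h2
    _ ≤ 1/2 * (‖g x‖^2 + Real.exp (-(2*a*x))) := by
        nlinarith [sq_nonneg (‖g x‖ - Real.exp (-(a*x))), e2]
  have i1 := key f q0 hL2f.1 hf2 cont_q0 (fun x => by rw [nq0]; exact hb0 x)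
  have i2 := key f'' q2 hL2f''.1 hf''2 cont_q2 (fun x => by rw [nq2]; exact hb2 x)
  exact i1.add i2

lemma key_formula (hm : MemH022 f f' f'') :
    f' 0 = ∫ x in Ici (0:ℝ), (f x * q0 x + f'' x * q2 x) := by
  have hint := int_prod_half hm
  obtain ⟨h0, hrep, hrep', hif', hif'', hL2f, hL2f''⟩ := hm
  have hf2 : Integrable (fun x => ‖f x‖^2) (volume.restrict (Ici (0:ℝ))) :=
    (memLp_two_iff_integrable_sq_norm hL2f.1).1 hL2f
  have hf''2 : Integrable (fun x => ‖f'' x‖^2) (volume.restrict (Ici (0:ℝ))) :=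
    (memLp_two_iff_integrable_sq_norm hL2f''.1).1 hL2f''
  set B2 : ℝ := ∫ y in Ici (0:ℝ), ‖f'' y‖^2 with hB2
  -- choose points xn
  have exists_pt : ∀ n : ℕ, ∃ x, x ∈ Icc ((n:ℝ)) (n+1) ∧
      ‖f x‖^2 ≤ (∫ y in Icc ((n:ℝ)) (n+1), ‖f y‖^2) + 1/((n:ℝ)+1) := by
    intro n
    by_contra hcon
    push_neg at hcon
    have hIcc : Icc ((n:ℝ)) (n+1) ⊆ Ici (0:ℝ) := fun x hx =>
      le_trans (Nat.cast_nonneg n) hx.1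
    have hfn : IntegrableOn (fun y => ‖f y‖^2) (Icc ((n:ℝ)) (n+1)) volume :=
      hf2.mono_measure (Measure.restrict_mono hIcc le_rfl)
    have hge := setIntegral_ge_of_const_le (μ := volume) measurableSet_Icc
      (by simp : volume (Icc ((n:ℝ)) (n+1)) ≠ ⊤)
      (fun x hx => le_of_lt (hcon x hx)) hfn
    rw [Real.volume_real_Icc] at hge
    have : ((n:ℝ)+1-n) = 1 := by ring
    rw [this] at hge
    simp only [max_eq_left zero_le_one, smul_eq_mul, one_mul] at hge
    have hpos : (0:ℝ) < 1/((n:ℝ)+1) := by positivity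
    linarith
  choose xn hxn1 hxn2 using exists_pt
  have hxn_ge : ∀ n : ℕ, (n:ℝ) ≤ xn n := fun n => (hxn1 n).1
  have hxn_pos : ∀ n : ℕ, 1 ≤ n → 0 < xn n := fun n hn =>
    lt_of_lt_of_le (by exact_mod_cast hn) (hxn_ge n)
  have hxn_top : Tendsto xn atTop atTop :=
    tendsto_atTop_mono hxn_ge tendsto_natCast_atTop_atTop
  -- tail of ∫‖f‖² tends to zero
  have tail0 : Tendsto (fun n : ℕ => ∫ y in Icc ((n:ℝ)) (n+1), ‖f y‖^2) atTop (nhds 0) := by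
    have hdom := MeasureTheory.tendsto_integral_of_dominated_convergence
      (F := fun n : ℕ => (Icc ((n:ℝ)) (n+1)).indicator (fun y => ‖f y‖^2))
      (f := fun _ : ℝ => (0:ℝ)) (bound := fun y => ‖f y‖^2)
      (μ := volume.restrict (Ici (0:ℝ)))
      (fun n => hf2.aestronglyMeasurable.indicator measurableSet_Icc)
      hf2
      (fun n => Eventually.of_forall fun y => by
        show ‖(Icc ((n:ℝ)) (n+1)).indicator (fun y => ‖f y‖^2) y‖ ≤ ‖f y‖^2
        calc ‖(Icc ((n:ℝ)) (n+1)).indicator (fun y => ‖f y‖^2) y‖ ≤ ‖‖f y‖^2‖ :=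
          norm_indicator_le_norm_self _ _
        _ = ‖f y‖^2 := by rw [Real.norm_eq_abs, abs_of_nonneg (sq_nonneg _)])
      (Eventually.of_forall fun y => by
        have hev : ∀ᶠ n : ℕ in atTop, (Icc ((n:ℝ)) (n+1)).indicator (fun y => ‖f y‖^2) y = 0 := by
          obtain ⟨N, hN⟩ := exists_nat_gt y
          filter_upwards [eventually_ge_atTop N] with n hn
          apply Set.indicator_of_notMem
          intro hy
          have : (N:ℝ) ≤ n := by exact_mod_cast hn
          have := hy.1
          linarith
        exact Tendsto.congr' (hev.mono fun n h => h.symm) tendsto_const_nhds)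
    simp only [integral_zero] at hdom
    refine hdom.congr fun n => ?_
    rw [integral_indicator measurableSet_Icc, Measure.restrict_restrict measurableSet_Icc]
    have hss : Icc ((n:ℝ)) (n+1) ⊆ Ici (0:ℝ) := fun x hx => le_trans (Nat.cast_nonneg n) hx.1
    rw [Set.inter_eq_self_of_subset_left hss]
  -- ‖f (xn n)‖ → 0
  have hfxn : Tendsto (fun n => ‖f (xn n)‖) atTop (nhds 0) := by
    have hsq : Tendsto (fun n => ‖f (xn n)‖^2) atTop (nhds 0) := by
      have hup : Tendsto (fun n : ℕ => (∫ y in Icc ((n:ℝ)) (n+1), ‖f y‖^2) + 1/((n:ℝ)+1))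
          atTop (nhds 0) := by
        have h2 : Tendsto (fun n : ℕ => 1/((n:ℝ)+1)) atTop (nhds 0) :=
          tendsto_one_div_add_atTop_nhds_zero_nat
        simpa using tail0.add h2
      exact tendsto_of_tendsto_of_tendsto_of_le_of_le' tendsto_const_nhds hup
        (Eventually.of_forall fun n => sq_nonneg _)
        (Eventually.of_forall fun n => hxn2 n)
    have := (Real.continuous_sqrt.tendsto 0).comp hsq
    simp only [Real.sqrt_zero] at this
    refine this.congr fun n => ?_
    simp only [Function.comp_apply]
    exact Real.sqrt_sq (norm_nonneg _)
  -- bound on ‖f' x‖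
  have hf'bd : ∀ x : ℝ, 0 < x → ‖f' x‖ ≤ ‖f' 0‖ + Real.sqrt B2 * Real.sqrt x := by
    intro x hx
    rw [hrep' x hx.le]
    refine le_trans (norm_add_le _ _) ?_
    have h1 : ‖∫ t in (0:ℝ)..x, f'' t‖ ≤ ∫ t in (0:ℝ)..x, ‖f'' t‖ :=
      intervalIntegral.norm_integral_le_integral_norm hx.le
    have h2 : ∫ t in (0:ℝ)..x, ‖f'' t‖ = ∫ t in Ioc (0:ℝ) x, ‖f'' t‖ * 1 := by
      rw [intervalIntegral.integral_of_le hx.le]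
      simp
    have hf''x : IntegrableOn f'' (Ioc 0 x) volume := (hif'' x hx).mono_set Ioc_subset_Icc_self
    have hIoc : Ioc (0:ℝ) x ⊆ Ici (0:ℝ) := fun y hy => hy.1.le
    have hsub : volume.restrict (Ioc (0:ℝ) x) ≤ volume.restrict (Ici (0:ℝ)) :=
      Measure.restrict_mono hIoc le_rfl
    have hf''2x : Integrable (fun y => ‖f'' y‖^2) (volume.restrict (Ioc (0:ℝ) x)) :=
      hf''2.mono_measure hsub
    have hCS := integral_CS (μ := volume.restrict (Ioc (0:ℝ) x)) (fun y => ‖f'' y‖)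
      (fun _ => (1:ℝ)) hf''2x (by simpa using (integrable_const (1:ℝ)))
      (by simpa using hf''x.norm)
      (Eventually.of_forall fun y => norm_nonneg _)
      (Eventually.of_forall fun y => zero_le_one)
    have h3 : ∫ y in Ioc (0:ℝ) x, (1:ℝ)^2 = x := by
      simp only [one_pow]
      rw [setIntegral_const]
      rw [Real.volume_real_Ioc]
      simp [ENNReal.toReal_ofReal hx.le, hx.le]
    have h4 : ∫ y in Ioc (0:ℝ) x, ‖f'' y‖^2 ≤ B2 := by
      rw [hB2]
      refine setIntegral_mono_set hf''2 ?_ ?_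
      · exact Eventually.of_forall fun y => sq_nonneg _
      · exact HasSubset.Subset.eventuallyLE hIoc
    have h5 : Real.sqrt (∫ y in Ioc (0:ℝ) x, ‖f'' y‖^2) ≤ Real.sqrt B2 :=
      Real.sqrt_le_sqrt h4
    have h6 : ∫ t in Ioc (0:ℝ) x, ‖f'' t‖ * 1 ≤ Real.sqrt B2 * Real.sqrt x := by
      refine le_trans hCS ?_
      rw [h3]
      exact mul_le_mul_of_nonneg_right h5 (Real.sqrt_nonneg _)
    have h7 : ‖∫ t in (0:ℝ)..x, f'' t‖ ≤ Real.sqrt B2 * Real.sqrt x := by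
      rw [h2] at h1
      exact le_trans h1 h6
    linarith
  -- the boundary sequence tends to zero
  have hc : Tendsto (fun n => f' (xn n) * q2 (xn n) - f (xn n) * q3 (xn n)) atTop (nhds 0) := by
    have hb : ∀ᶠ n : ℕ in atTop, ‖f' (xn n) * q2 (xn n) - f (xn n) * q3 (xn n)‖ ≤
        (‖f' 0‖ + Real.sqrt B2 * Real.sqrt (xn n)) * Real.exp (-(a * xn n)) + 2 * ‖f (xn n)‖ := by
      filter_upwards [eventually_ge_atTop 1] with n hn
      have hx := hxn_pos n hn
      refine le_trans (norm_sub_le _ _) ?_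
      have h1 : ‖f' (xn n) * q2 (xn n)‖ ≤
          (‖f' 0‖ + Real.sqrt B2 * Real.sqrt (xn n)) * Real.exp (-(a * xn n)) := by
        rw [norm_mul, nq2]
        refine mul_le_mul (hf'bd _ hx) (le_trans (hb2 _) (le_refl _)) (abs_nonneg _) ?_
        positivity
      have h2 : ‖f (xn n) * q3 (xn n)‖ ≤ 2 * ‖f (xn n)‖ := by
        rw [norm_mul, nq3, mul_comm (2:ℝ)]
        refine mul_le_mul_of_nonneg_left ?_ (norm_nonneg _)
        refine le_trans (hb3 _) ?_
        nlinarith [exp_le_one hx.le, Real.exp_pos (-(a * xn n))]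
      linarith
    have hlim : Tendsto (fun n => (‖f' 0‖ + Real.sqrt B2 * Real.sqrt (xn n)) *
        Real.exp (-(a * xn n)) + 2 * ‖f (xn n)‖) atTop (nhds 0) := by
      have t1 := (decay (‖f' 0‖) (Real.sqrt B2)).comp hxn_top
      have t2 := hfxn.const_mul 2
      have := t1.add t2
      simpa using this
    exact squeeze_zero_norm' hb hlim
  -- limits of interval integrals
  have hIoi : IntegrableOn (fun x => f x * q0 x + f'' x * q2 x) (Ioi 0) volume :=
    hint.mono_set Ioi_subset_Ici_self
  have hlim1 : Tendsto (fun n => ∫ x in (0:ℝ)..(xn n), (f x * q0 x + f'' x * q2 x)) atTop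
      (nhds (∫ x in Ioi (0:ℝ), (f x * q0 x + f'' x * q2 x))) :=
    intervalIntegral_tendsto_integral_Ioi 0 hIoi hxn_top
  have hident : ∀ᶠ n : ℕ in atTop, ∫ x in (0:ℝ)..(xn n), (f x * q0 x + f'' x * q2 x)
      = f' 0 + (f' (xn n) * q2 (xn n) - f (xn n) * q3 (xn n)) := by
    filter_upwards [eventually_ge_atTop 1] with n hn
    have hx := hxn_pos n hn
    rw [intervalIntegral.integral_of_le hx.le]
    have := key_identity ⟨h0, hrep, hrep', hif', hif'', hL2f, hL2f''⟩ hx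
    rw [this]
    ring
  have hlim2 : Tendsto (fun n => ∫ x in (0:ℝ)..(xn n), (f x * q0 x + f'' x * q2 x)) atTop
      (nhds (f' 0)) := by
    have : Tendsto (fun n => f' 0 + (f' (xn n) * q2 (xn n) - f (xn n) * q3 (xn n))) atTop
        (nhds (f' 0)) := by
      have := (tendsto_const_nhds (x := f' 0) (f := atTop (α := ℕ))).add hc
      simpa using this
    exact Tendsto.congr' (hident.mono fun n h => h.symm) this
  have := tendsto_nhds_unique hlim2 hlim1
  rw [this, integral_Ici_eq_integral_Ioi]

end Main


lemma two_CS (A B C D : ℝ) (hA : 0 ≤ A) (hB : 0 ≤ B) (hC : 0 ≤ C) (hD : 0 ≤ D) :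
    A*C + B*D ≤ Real.sqrt (A^2+B^2) * Real.sqrt (C^2+D^2) := by
  have h1 : (A*C+B*D)^2 ≤ (A^2+B^2)*(C^2+D^2) := by nlinarith [sq_nonneg (A*D-B*C)]
  calc A*C+B*D = Real.sqrt ((A*C+B*D)^2) := (Real.sqrt_sq (by positivity)).symm
  _ ≤ Real.sqrt ((A^2+B^2)*(C^2+D^2)) := Real.sqrt_le_sqrt h1
  _ = Real.sqrt (A^2+B^2) * Real.sqrt (C^2+D^2) := Real.sqrt_mul (by positivity) _

lemma a_rpow : a = (2:ℝ) ^ (-(1/2:ℝ)) := by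
  rw [Real.rpow_neg (by norm_num : (0:ℝ) ≤ 2), a, Real.sqrt_eq_rpow]

lemma sqrt_a : Real.sqrt a = (2:ℝ) ^ (-(1/4:ℝ)) := by
  rw [a_rpow, Real.sqrt_eq_rpow, ← Real.rpow_mul (by norm_num : (0:ℝ) ≤ 2)]
  norm_num

section MainIneq

variable {f f' f'' : ℝ → ℂ}

lemma main_ineq (hm : MemH022 f f' f'') :
    ‖f' 0‖ ≤ (2:ℝ) ^ (-(1/4:ℝ)) *
      Real.sqrt (∫ x in Ici (0:ℝ), (‖f x‖^2 + ‖f'' x‖^2)) := by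
  have hint := int_prod_half hm
  have hL2f := hm.2.2.2.2.2.1
  have hL2f'' := hm.2.2.2.2.2.2
  have hf2 : Integrable (fun x => ‖f x‖^2) (volume.restrict (Ici (0:ℝ))) :=
    (memLp_two_iff_integrable_sq_norm hL2f.1).1 hL2f
  have hf''2 : Integrable (fun x => ‖f'' x‖^2) (volume.restrict (Ici (0:ℝ))) :=
    (memLp_two_iff_integrable_sq_norm hL2f''.1).1 hL2f''
  set u : ℝ → ℝ := fun x => Real.sqrt (‖f x‖^2 + ‖f'' x‖^2) with hu
  set v : ℝ → ℝ := fun x => Real.sqrt (p0 x^2 + p2 x^2) with hv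
  have hu2 : ∀ x, u x^2 = ‖f x‖^2 + ‖f'' x‖^2 := fun x => Real.sq_sqrt (by positivity)
  have hv2 : ∀ x, v x^2 = Real.exp (-(2*a*x)) := fun x => by
    rw [hv, Real.sq_sqrt (by positivity), sq_sum]
  have hum : AEStronglyMeasurable u (volume.restrict (Ici (0:ℝ))) :=
    Real.continuous_sqrt.comp_aestronglyMeasurable
      (hf2.aestronglyMeasurable.add hf''2.aestronglyMeasurable)
  have hvm : AEStronglyMeasurable v (volume.restrict (Ici (0:ℝ))) :=
    (Real.continuous_sqrt.comp ((cont_p0.pow 2).add (cont_p2.pow 2))).aestronglyMeasurable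
  have hu2i : Integrable (fun x => u x^2) (volume.restrict (Ici (0:ℝ))) :=
    (hf2.add hf''2).congr (Eventually.of_forall fun x => (hu2 x).symm)
  have hv2i : Integrable (fun x => v x^2) (volume.restrict (Ici (0:ℝ))) :=
    int_exp2.congr (Eventually.of_forall fun x => (hv2 x).symm)
  have huvi : Integrable (fun x => u x * v x) (volume.restrict (Ici (0:ℝ))) := by
    refine Integrable.mono' ((hu2i.add hv2i).const_mul (1/2)) (hum.mul hvm) ?_
    refine Eventually.of_forall fun x => ?_
    have h1 : 0 ≤ u x := Real.sqrt_nonneg _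
    have h2 : 0 ≤ v x := Real.sqrt_nonneg _
    rw [Real.norm_eq_abs, abs_of_nonneg (mul_nonneg h1 h2)]
    simp only [Pi.add_apply]
    nlinarith [sq_nonneg (u x - v x)]
  have hpt : ∀ x, ‖f x * q0 x + f'' x * q2 x‖ ≤ u x * v x := by
    intro x
    refine le_trans (norm_add_le _ _) ?_
    rw [norm_mul, norm_mul, nq0, nq2]
    have := two_CS (‖f x‖) (‖f'' x‖) (|p0 x|) (|p2 x|)
      (norm_nonneg _) (norm_nonneg _) (abs_nonneg _) (abs_nonneg _)
    rw [sq_abs, sq_abs] at this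
    exact this
  have step1 : ‖f' 0‖ ≤ ∫ x in Ici (0:ℝ), u x * v x := by
    rw [key_formula hm]
    refine le_trans (norm_integral_le_integral_norm _) ?_
    exact integral_mono hint.norm huvi hpt
  have step2 : ∫ x in Ici (0:ℝ), u x * v x ≤
      Real.sqrt (∫ x in Ici (0:ℝ), u x^2) * Real.sqrt (∫ x in Ici (0:ℝ), v x^2) :=
    integral_CS u v hu2i hv2i huvi
      (Eventually.of_forall fun x => Real.sqrt_nonneg _)
      (Eventually.of_forall fun x => Real.sqrt_nonneg _)
  have e1 : ∫ x in Ici (0:ℝ), v x^2 = a := by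
    rw [← val_exp2]
    exact setIntegral_congr_fun measurableSet_Ici fun x _ => hv2 x
  have e2 : ∫ x in Ici (0:ℝ), u x^2 = ∫ x in Ici (0:ℝ), (‖f x‖^2 + ‖f'' x‖^2) :=
    setIntegral_congr_fun measurableSet_Ici fun x _ => hu2 x
  calc ‖f' 0‖ ≤ ∫ x in Ici (0:ℝ), u x * v x := step1
  _ ≤ Real.sqrt (∫ x in Ici (0:ℝ), u x^2) * Real.sqrt (∫ x in Ici (0:ℝ), v x^2) := step2
  _ = (2:ℝ) ^ (-(1/4:ℝ)) * Real.sqrt (∫ x in Ici (0:ℝ), (‖f x‖^2 + ‖f'' x‖^2)) := by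
      rw [e1, e2, sqrt_a, mul_comm]

end MainIneq

lemma q0_not_ae_zero : ¬ (q0 =ᵐ[volume.restrict (Ici (0:ℝ))] 0) := by
  intro h
  have h2 : (volume.restrict (Ici (0:ℝ))) {x | q0 x ≠ 0} = 0 := by
    rw [Filter.EventuallyEq] at h
    rw [ae_iff] at h
    simpa using h
  have hsub : Ioo (0:ℝ) 1 ⊆ {x | q0 x ≠ 0} := by
    intro x hx
    have hax : 0 < a * x := mul_pos ha hx.1
    have hax2 : a * x < Real.pi := by
      have : a * x < 1 := by nlinarith [ha1, hx.2, hx.1, ha]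
      linarith [Real.pi_gt_three]
    have hsin : 0 < Real.sin (a*x) := Real.sin_pos_of_pos_of_lt_pi hax hax2
    have hp : p0 x ≠ 0 := by
      rw [p0]
      positivity
    simp only [mem_setOf_eq, q0]
    exact_mod_cast Complex.ofReal_ne_zero.2 hp
  have h3 : (volume.restrict (Ici (0:ℝ))) (Ioo 0 1) = 0 :=
    measure_mono_null hsub h2
  rw [Measure.restrict_apply measurableSet_Ioo] at h3
  have : Ioo (0:ℝ) 1 ∩ Ici 0 = Ioo 0 1 :=
    Set.inter_eq_self_of_subset_left (fun x hx => hx.1.le)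
  rw [this, Real.volume_Ioo] at h3
  simp at h3

lemma sup_attained : (2:ℝ) ^ (-(1/2:ℝ)) =
    ‖q1 0‖ ^ 2 / ∫ x in Ici (0 : ℝ), (‖q0 x‖ ^ 2 + ‖q2 x‖ ^ 2) := by
  rw [val_q, ← a_rpow]
  have : ‖q1 0‖ = a := by
    simp only [q1, p10, Complex.norm_real]
    exact abs_of_pos ha
  rw [this]
  field_simp [ne_of_gt ha]

theorem statement17' :
    (∀ f f' f'' : ℝ → ℂ, MemH022 f f' f'' →
      ‖f' 0‖ ≤ (2 : ℝ) ^ (-(1/4 : ℝ)) *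
        Real.sqrt (∫ x in Ici (0 : ℝ), (‖f x‖ ^ 2 + ‖f'' x‖ ^ 2))) ∧
    IsLUB {r : ℝ | ∃ f f' f'' : ℝ → ℂ, MemH022 f f' f'' ∧
        ¬ (f =ᵐ[volume.restrict (Ici (0 : ℝ))] 0) ∧
        r = ‖f' 0‖ ^ 2 / ∫ x in Ici (0 : ℝ), (‖f x‖ ^ 2 + ‖f'' x‖ ^ 2)}
      ((2 : ℝ) ^ (-(1/2 : ℝ))) := by
  have hmem : ((2:ℝ) ^ (-(1/2:ℝ))) ∈ {r : ℝ | ∃ f f' f'' : ℝ → ℂ, MemH022 f f' f'' ∧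
      ¬ (f =ᵐ[volume.restrict (Ici (0 : ℝ))] 0) ∧
      r = ‖f' 0‖ ^ 2 / ∫ x in Ici (0 : ℝ), (‖f x‖ ^ 2 + ‖f'' x‖ ^ 2)} :=
    ⟨q0, q1, q2, memq, q0_not_ae_zero, sup_attained⟩
  refine ⟨fun f f' f'' hm => main_ineq hm, ?_, ?_⟩
  · rintro r ⟨f, f', f'', hm, hne, rfl⟩
    have hL2f := hm.2.2.2.2.2.1
    have hL2f'' := hm.2.2.2.2.2.2
    have hf2 : Integrable (fun x => ‖f x‖^2) (volume.restrict (Ici (0:ℝ))) :=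
      (memLp_two_iff_integrable_sq_norm hL2f.1).1 hL2f
    have hf''2 : Integrable (fun x => ‖f'' x‖^2) (volume.restrict (Ici (0:ℝ))) :=
      (memLp_two_iff_integrable_sq_norm hL2f''.1).1 hL2f''
    set D : ℝ := ∫ x in Ici (0:ℝ), (‖f x‖^2 + ‖f'' x‖^2) with hD
    have hDpos : 0 < D := by
      have h1 : 0 < ∫ x in Ici (0:ℝ), ‖f x‖^2 := by
        rw [integral_pos_iff_support_of_nonneg_ae
          (Eventually.of_forall fun x => sq_nonneg _) hf2]
        have hsupp : Function.support (fun x => ‖f x‖^2) = {x | f x ≠ 0} := by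
          ext x
          simp [Function.mem_support]
        rw [hsupp]
        rw [pos_iff_ne_zero]
        intro hzero
        apply hne
        rw [Filter.EventuallyEq, ae_iff]
        simpa using hzero
      have h2 : ∫ x in Ici (0:ℝ), ‖f x‖^2 ≤ D := by
        rw [hD]
        refine integral_mono hf2 (hf2.add hf''2) fun x => ?_
        simp only [le_add_iff_nonneg_right]
        positivity
      linarith
    have hineq := main_ineq hm
    have hsq : ‖f' 0‖^2 ≤ (2:ℝ) ^ (-(1/2:ℝ)) * D := by
      have hc : (0:ℝ) ≤ (2:ℝ) ^ (-(1/4:ℝ)) := le_of_lt (Real.rpow_pos_of_pos two_pos _)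
      have h3 : ‖f' 0‖^2 ≤ ((2:ℝ) ^ (-(1/4:ℝ)) * Real.sqrt D)^2 := by
        refine pow_le_pow_left₀ (norm_nonneg _) hineq 2
      have h4 : ((2:ℝ) ^ (-(1/4:ℝ)) * Real.sqrt D)^2
          = ((2:ℝ) ^ (-(1/4:ℝ)))^2 * D := by
        rw [mul_pow, Real.sq_sqrt hDpos.le]
      have h5 : ((2:ℝ) ^ (-(1/4:ℝ)))^2 = (2:ℝ) ^ (-(1/2:ℝ)) := by
        rw [← Real.rpow_natCast ((2:ℝ) ^ (-(1/4:ℝ))) 2, ← Real.rpow_mul (by norm_num : (0:ℝ) ≤ 2)]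
        norm_num
      rw [h4, h5] at h3
      exact h3
    rw [div_le_iff₀ hDpos]
    linarith
  · intro b hb
    exact hb hmem

end St17

end

/-- Remark 4.9 (i) of Gesztesy–Kalton–Makarov–Tsekanovskii.
For every `f ∈ H₀^{2,2}((0,∞))` one has
`|f'(0₊)| ≤ 2^{-1/4} (∫₀^∞ (|f|² + |f''|²) dx)^{1/2}`, and the constant `2^{-1/4}` is
best possible: `sup_{0 ≠ f} |f'(0₊)|²/∫₀^∞(|f|²+|f''|²) dx = 2^{-1/2}`. -/
theorem statement17 :
    (∀ f f' f'' : ℝ → ℂ, MemH022 f f' f'' →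
      ‖f' 0‖ ≤ (2 : ℝ) ^ (-(1/4 : ℝ)) *
        Real.sqrt (∫ x in Ici (0 : ℝ), (‖f x‖ ^ 2 + ‖f'' x‖ ^ 2))) ∧
    IsLUB {r : ℝ | ∃ f f' f'' : ℝ → ℂ, MemH022 f f' f'' ∧
        ¬ (f =ᵐ[volume.restrict (Ici (0 : ℝ))] 0) ∧
        r = ‖f' 0‖ ^ 2 / ∫ x in Ici (0 : ℝ), (‖f x‖ ^ 2 + ‖f'' x‖ ^ 2)}
      ((2 : ℝ) ^ (-(1/2 : ℝ))) :=
  St17.statement17'
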